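/- Let G be a finitely generated group and ρ : G → Homeo₊(ℝ) a homomorphism such that no point of ℝ is fixed by every element of ρ(G). Then the action is cocompact: there exists a compact interval I ⊆ ℝ such that every orbit ρ(G)x intersects I. -/

import Mathlib

/-- A finitely generated group acting on `ℝ` by orientation-preserving
homeomorphisms (encoded as strictly monotone bijections of `ℝ`) without a global fixed
point acts cocompactly: some compact interval `[a,b]` meets every orbit. -/
theorem fg_action_without_global_fixed_point_cocompact
    {G : Type*} [Group G] (hfg : Group.FG G) (rho : G →* Equiv.Perm ℝ)
    (hmono : ∀ g : G, StrictMono ⇑(rho g))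
    (hnofix : ∀ x : ℝ, ∃ g : G, rho g x ≠ x) :
    ∃ a b : ℝ, a ≤ b ∧ ∀ x : ℝ, ∃ g : G, rho g x ∈ Set.Icc a b := by
  classical
  -- each `rho g` is an order isomorphism of `ℝ`
  let e : G → (ℝ ≃o ℝ) := fun g => ⟨rho g, fun {u v} => (hmono g).le_iff_le⟩
  have he : ∀ g (y : ℝ), e g y = rho g y := fun _ _ => rfl
  -- the orbit of any point is unbounded above and below
  have himg : ∀ (g : G) (x : ℝ),
      (fun y => rho g y) '' (Set.range fun h : G => rho h x)
        = (Set.range fun h : G => rho h x) := by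
    intro g x
    ext y
    constructor
    · rintro ⟨z, ⟨h, rfl⟩, rfl⟩
      exact ⟨g * h, by simp [map_mul]⟩
    · rintro ⟨h, rfl⟩
      refine ⟨rho (g⁻¹ * h) x, ⟨g⁻¹ * h, rfl⟩, ?_⟩
      simp [map_mul, ← Equiv.Perm.mul_apply, ← map_mul]
  have hOne : ∀ x : ℝ, (Set.range fun h : G => rho h x).Nonempty :=
    fun x => ⟨x, 1, by simp⟩
  have hunb_above : ∀ x c : ℝ, ∃ g : G, c < rho g x := by
    intro x c
    by_contra hcon
    push_neg at hcon
    set O : Set ℝ := Set.range fun h : G => rho h x with hO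
    have hbdd : BddAbove O := ⟨c, by rintro y ⟨h, rfl⟩; exact hcon h⟩
    have hfix : ∀ g : G, rho g (sSup O) = sSup O := by
      intro g
      have := (e g).map_csSup' (hOne x) hbdd
      rw [he] at this
      rw [this]
      congr 1
      exact himg g x
    obtain ⟨g, hg⟩ := hnofix (sSup O)
    exact hg (hfix g)
  have hunb_below : ∀ x c : ℝ, ∃ g : G, rho g x < c := by
    intro x c
    by_contra hcon
    push_neg at hcon
    set O : Set ℝ := Set.range fun h : G => rho h x with hO
    have hbdd : BddBelow O := ⟨c, by rintro y ⟨h, rfl⟩; exact hcon h⟩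
    have hfix : ∀ g : G, rho g (sInf O) = sInf O := by
      intro g
      have := (e g).map_csInf' (hOne x) hbdd
      rw [he] at this
      rw [this]
      congr 1
      exact himg g x
    obtain ⟨g, hg⟩ := hnofix (sInf O)
    exact hg (hfix g)
  -- choose the interval from a finite symmetric generating set
  obtain ⟨S, hS⟩ := hfg
  set T : Finset G := S ∪ S.image (·⁻¹) with hT
  set V : Finset ℝ := insert (0 : ℝ) (T.image fun s => rho s 0) with hV
  have hVne : V.Nonempty := ⟨0, Finset.mem_insert_self _ _⟩
  set a := V.min' hVne with ha
  set b := V.max' hVne with hb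
  have ha0 : a ≤ 0 := V.min'_le 0 (Finset.mem_insert_self _ _)
  have hb0 : (0 : ℝ) ≤ b := V.le_max' 0 (Finset.mem_insert_self _ _)
  have hab : a ≤ b := ha0.trans hb0
  have hgen : ∀ s : G, s ∈ (↑S ∪ (↑S)⁻¹ : Set G) → a ≤ rho s 0 ∧ rho s 0 ≤ b := by
    intro s hs
    have hsT : s ∈ T := by
      rcases hs with hs | hs
      · exact Finset.mem_union_left _ hs
      · refine Finset.mem_union_right _ ?_
        exact Finset.mem_image.2 ⟨s⁻¹, hs, by simp⟩
    have hmem : rho s 0 ∈ V :=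
      Finset.mem_insert_of_mem (Finset.mem_image.2 ⟨s, hsT, rfl⟩)
    exact ⟨V.min'_le _ hmem, V.le_max' _ hmem⟩
  -- key inductive claim
  have key : ∀ l : List G, (∀ s ∈ l, s ∈ (↑S ∪ (↑S)⁻¹ : Set G)) →
      ∀ y : ℝ, a ≤ y → rho l.prod y < a → ∃ g : G, rho g y ∈ Set.Icc a b := by
    intro l
    induction l with
    | nil =>
      intro _ y hy hlt
      simp only [List.prod_nil, map_one, Equiv.Perm.coe_one, id_eq] at hlt
      exact absurd hlt (not_lt.2 hy)
    | cons s t ih =>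
      intro hmem y hy hlt
      have hprod : rho (s :: t).prod y = rho s (rho t.prod y) := by
        simp [List.prod_cons, map_mul]
      set z := rho t.prod y with hz
      rcases lt_or_ge z a with hza | hza
      · exact ih (fun u hu => hmem u (List.mem_cons_of_mem _ hu)) y hy hza
      · rcases le_or_gt z b with hzb | hzb
        · exact ⟨t.prod, hza, hzb⟩
        · exfalso
          have hs0 : a ≤ rho s 0 := (hgen s (hmem s (List.mem_cons_self))).1
          have : rho s 0 < rho s z := (hmono s) (lt_of_le_of_lt hb0 hzb)
          rw [hprod] at hlt
          exact absurd hlt (not_lt.2 (hs0.trans this.le))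
  refine ⟨a, b, hab, ?_⟩
  intro x
  obtain ⟨g₁, hg₁⟩ := hunb_above x b
  obtain ⟨g₂, hg₂⟩ := hunb_below x a
  -- decompose g₂ * g₁⁻¹ as a word in the symmetric generating set
  have hmemtop : g₂ * g₁⁻¹ ∈ Submonoid.closure (↑S ∪ (↑S)⁻¹ : Set G) := by
    rw [← Subgroup.closure_toSubmonoid, hS]
    trivial
  obtain ⟨l, hl, hlprod⟩ := Submonoid.exists_list_of_mem_closure hmemtop
  have hly : rho l.prod (rho g₁ x) < a := by
    rw [hlprod]
    have : rho (g₂ * g₁⁻¹) (rho g₁ x) = rho g₂ x := by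
      simp [map_mul, ← Equiv.Perm.mul_apply, ← map_mul, mul_assoc]
    rw [this]
    exact hg₂
  obtain ⟨g, hg⟩ := key l hl (rho g₁ x) (hab.trans hg₁.le) hly
  refine ⟨g * g₁, ?_⟩
  rw [map_mul]
  exact hg
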